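/- If the learning algorithm A is OAROS with rate ε1, then for every probability measure D on Z and every n ≥ 1, E_{T~D^n} [ L_D(A_n(T)) − L_T(A_n(T)) ] ≤ ε1(n). -/

import Mathlib

open MeasureTheory

noncomputable section

/-- The i.i.d. sample measure of size `n` drawn from `D`. -/
def iid {Z : Type*} [MeasurableSpace Z] (D : Measure Z) (n : ℕ) :
    Measure (Fin n → Z) :=
  Measure.pi fun _ => D

/-- The learning algorithm is symmetric: invariant under permutations of the
entries of its input tuple. -/
def IsSymmetricAlg {Z H : Type*} (A : ∀ k : ℕ, (Fin k → Z) → H) : Prop :=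
  ∀ (k : ℕ) (σ : Equiv.Perm (Fin k)) (S : Fin k → Z), A k (S ∘ σ) = A k S

/-- For each `k`, the map `(S, z) ↦ ℓ(A k S, z)` is measurable and bounded. -/
def MeasBddAlg {Z H : Type*} [MeasurableSpace Z] (ℓ : H → Z → ℝ)
    (A : ∀ k : ℕ, (Fin k → Z) → H) : Prop :=
  ∀ k : ℕ, Measurable (fun p : (Fin k → Z) × Z => ℓ (A k p.1) p.2) ∧
    ∃ C : ℝ, ∀ (S : Fin k → Z) (z : Z), ℓ (A k S) z ≤ C

/-- On-Average-Replace-One-Stability with rate `ε1`. -/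
def OAROS {Z H : Type*} [MeasurableSpace Z] (ℓ : H → Z → ℝ)
    (A : ∀ k : ℕ, (Fin k → Z) → H) (ε1 : ℕ → ℝ) : Prop :=
  Antitone ε1 ∧
  ∀ (D : Measure Z), IsProbabilityMeasure D → ∀ n : ℕ, 1 ≤ n →
    ∫ T, ∫ x',
        (n : ℝ)⁻¹ * ∑ i : Fin n,
          |ℓ (A n T) (T i) - ℓ (A n (Function.update T i x')) (T i)|
      ∂D ∂(iid D n) ≤ ε1 n

/-- an OAROS-stable algorithm does not overfit on average:
`E_T [ L_D(A_n(T)) − L_T(A_n(T)) ] ≤ ε1(n)`. -/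
lemma key_mp {Z : Type*} [MeasurableSpace Z] (D : Measure Z) [IsProbabilityMeasure D]
    (n : ℕ) (i : Fin n) :
    MeasurePreserving (fun p : (Fin n → Z) × Z => (Function.update p.1 i p.2, p.1 i))
      ((iid D n).prod D) ((iid D n).prod D) := by
  classical
  haveI : IsProbabilityMeasure (iid D n) := by unfold iid; infer_instance
  haveI : IsProbabilityMeasure (iid D (n + 1)) := by unfold iid; infer_instance
  let g : (Fin (n + 1) → Z) ≃ᵐ Z × (Fin n → Z) :=
    MeasurableEquiv.piFinSuccAbove (fun _ => Z) (Fin.last n)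
  let σ : Equiv.Perm (Fin (n + 1)) := Equiv.swap (Fin.castSucc i) (Fin.last n)
  let c : (Fin (n + 1) → Z) ≃ᵐ (Fin (n + 1) → Z) :=
    MeasurableEquiv.piCongrLeft (fun _ : Fin (n + 1) => Z) σ
  have hg : MeasurePreserving g (iid D (n + 1)) (D.prod (iid D n)) :=
    measurePreserving_piFinSuccAbove (fun _ => D) (Fin.last n)
  have hc : MeasurePreserving c (iid D (n + 1)) (iid D (n + 1)) :=
    measurePreserving_piCongrLeft (fun _ => D) σ
  have hsw1 : MeasurePreserving (Prod.swap : (Fin n → Z) × Z → Z × (Fin n → Z))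
      ((iid D n).prod D) (D.prod (iid D n)) := Measure.measurePreserving_swap
  have hsw2 : MeasurePreserving (Prod.swap : Z × (Fin n → Z) → (Fin n → Z) × Z)
      (D.prod (iid D n)) ((iid D n).prod D) := Measure.measurePreserving_swap
  have hcomp := hsw2.comp (hg.comp (hc.comp ((hg.symm g).comp hsw1)))
  have heq : (Prod.swap ∘ ⇑g ∘ ⇑c ∘ ⇑g.symm ∘ Prod.swap)
      = (fun p : (Fin n → Z) × Z => (Function.update p.1 i p.2, p.1 i)) := by
    funext p
    obtain ⟨T, x⟩ := p
    have hU : (g.symm (Prod.swap (T, x))) = Fin.snoc T x := by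
      simp [g, MeasurableEquiv.piFinSuccAbove, Fin.snocEquiv]
    have hcU : c (Fin.snoc T x) = fun b => (Fin.snoc T x : Fin (n + 1) → Z) (σ b) := by
      funext b
      simp [c, MeasurableEquiv.coe_piCongrLeft, Equiv.piCongrLeft_apply, eq_rec_constant,
        Equiv.symm_swap, σ]
      exact eq_rec_constant _ _
    simp only [Function.comp_apply, hU, hcU]
    have hgV : ∀ V : Fin (n + 1) → Z, g V = (V (Fin.last n), fun j => V (Fin.castSucc j)) := by
      intro V
      refine Prod.ext ?_ (funext fun j => ?_) <;>
        simp [g, MeasurableEquiv.piFinSuccAbove, Fin.insertNthEquiv, Fin.removeNth,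
          Fin.succAbove_last_apply, Fin.init]
    rw [hgV]
    refine Prod.ext ?_ ?_
    · funext j
      by_cases h : j = i
      · subst h
        simp [σ, Equiv.swap_apply_left]
      · have h1 : Fin.castSucc j ≠ Fin.castSucc i := by simpa [Fin.castSucc_inj] using h
        have h2 : Fin.castSucc j ≠ Fin.last n := (Fin.castSucc_lt_last j).ne
        simp [σ, Equiv.swap_apply_of_ne_of_ne h1 h2, Function.update_of_ne h]
    · simp [σ, Equiv.swap_apply_right]
  rw [heq] at hcomp
  exact hcomp

theorem stmt_1 {Z H : Type*} [MeasurableSpace Z] (ℓ : H → Z → ℝ)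
    (A : ∀ k : ℕ, (Fin k → Z) → H) (ε1 : ℕ → ℝ)
    (hℓ : ∀ (h : H) (z : Z), 0 ≤ ℓ h z)
    (hsym : IsSymmetricAlg A) (hmb : MeasBddAlg ℓ A)
    (hst : OAROS ℓ A ε1)
    (D : Measure Z) [IsProbabilityMeasure D] (n : ℕ) (hn : 1 ≤ n) :
    ∫ T,
        ((∫ z, ℓ (A n T) z ∂D) - (n : ℝ)⁻¹ * ∑ i : Fin n, ℓ (A n T) (T i))
      ∂(iid D n) ≤ ε1 n := by
  classical
  obtain ⟨hmeas, C, hbd⟩ := hmb n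
  have hnR : (0 : ℝ) < n := by exact_mod_cast hn
  haveI : IsProbabilityMeasure (iid D n) := by unfold iid; infer_instance
  set P : Measure ((Fin n → Z) × Z) := (iid D n).prod D with hPdef
  haveI hPP : IsProbabilityMeasure P := by rw [hPdef]; infer_instance
  set f : (Fin n → Z) × Z → ℝ := fun p => ℓ (A n p.1) p.2 with hfdef
  have hnorm : ∀ (h : H) (z : Z), ℓ h z ≤ C → ‖ℓ h z‖ ≤ C := fun h z hle => by
    rw [Real.norm_eq_abs, abs_of_nonneg (hℓ h z)]; exact hle
  have hfint : Integrable f P :=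
    ⟨hmeas.aestronglyMeasurable,
      HasFiniteIntegral.of_bounded (C := C)
        (Filter.Eventually.of_forall fun p => hnorm _ _ (hbd p.1 p.2))⟩
  have hgint : ∀ i : Fin n, Integrable (fun p : (Fin n → Z) × Z => ℓ (A n p.1) (p.1 i)) P :=
    fun i =>
    ⟨(hmeas.comp (measurable_fst.prodMk ((measurable_pi_apply i).comp
        measurable_fst))).aestronglyMeasurable,
      HasFiniteIntegral.of_bounded (C := C)
        (Filter.Eventually.of_forall fun p => hnorm _ _ (hbd _ _))⟩
  have hmp : ∀ i : Fin n,
      MeasurePreserving (fun p : (Fin n → Z) × Z => (Function.update p.1 i p.2, p.1 i)) P P :=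
    fun i => key_mp D n i
  have hΦint : ∀ i : Fin n,
      Integrable (fun p : (Fin n → Z) × Z => ℓ (A n (Function.update p.1 i p.2)) (p.1 i)) P := by
    intro i
    exact ((hmp i).integrable_comp hfint.1).mpr hfint
  have hI : ∀ i : Fin n,
      ∫ p, ℓ (A n (Function.update p.1 i p.2)) (p.1 i) ∂P = ∫ p, f p ∂P := by
    intro i
    calc ∫ p, ℓ (A n (Function.update p.1 i p.2)) (p.1 i) ∂P
        = ∫ p, f ((fun p : (Fin n → Z) × Z => (Function.update p.1 i p.2, p.1 i)) p) ∂P := rfl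
      _ = ∫ q, f q ∂(P.map (fun p : (Fin n → Z) × Z => (Function.update p.1 i p.2, p.1 i))) :=
          (integral_map (hmp i).measurable.aemeasurable
            (by rw [(hmp i).map_eq]; exact hfint.1)).symm
      _ = ∫ q, f q ∂P := by rw [(hmp i).map_eq]
  have hLD_int : Integrable (fun T => ∫ z, ℓ (A n T) z ∂D) (iid D n) := hfint.integral_prod_left
  have hTi_int : ∀ i : Fin n, Integrable (fun T : Fin n → Z => ℓ (A n T) (T i)) (iid D n) :=
    fun i =>
    ⟨(hmeas.comp (measurable_id.prodMk (measurable_pi_apply i))).aestronglyMeasurable,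
      HasFiniteIntegral.of_bounded (C := C)
        (Filter.Eventually.of_forall fun T => hnorm _ _ (hbd _ _))⟩
  have hsum_int : Integrable
      (fun T : Fin n → Z => (n : ℝ)⁻¹ * ∑ i : Fin n, ℓ (A n T) (T i)) (iid D n) :=
    (integrable_finset_sum _ fun i _ => hTi_int i).const_mul _
  rw [integral_sub hLD_int hsum_int, integral_const_mul,
    integral_finset_sum _ fun i (_ : i ∈ Finset.univ) => hTi_int i]
  have e1 : ∫ T, ∫ z, ℓ (A n T) z ∂D ∂(iid D n) = ∫ p, f p ∂P := (integral_prod f hfint).symm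
  have e2 : ∀ i : Fin n, ∫ T, ℓ (A n T) (T i) ∂(iid D n)
      = ∫ p, ℓ (A n p.1) (p.1 i) ∂P := by
    intro i
    rw [integral_prod _ (hgint i)]
    simp
  rw [e1, Finset.sum_congr rfl fun i _ => e2 i]
  have habs_int : ∀ i : Fin n, Integrable
      (fun p : (Fin n → Z) × Z =>
        |ℓ (A n p.1) (p.1 i) - ℓ (A n (Function.update p.1 i p.2)) (p.1 i)|) P :=
    fun i => ((hgint i).sub (hΦint i)).abs
  have h4 : ∀ i : Fin n,
      (∫ p, ℓ (A n (Function.update p.1 i p.2)) (p.1 i) ∂P)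
        - ∫ p, ℓ (A n p.1) (p.1 i) ∂P
      ≤ ∫ p, |ℓ (A n p.1) (p.1 i) - ℓ (A n (Function.update p.1 i p.2)) (p.1 i)| ∂P := by
    intro i
    rw [← integral_sub (hΦint i) (hgint i)]
    refine integral_mono ((hΦint i).sub (hgint i)) (habs_int i) fun p => ?_
    rw [abs_sub_comm]
    exact le_abs_self _
  have h3 : (∫ p, f p ∂P) - (n : ℝ)⁻¹ * ∑ i : Fin n, ∫ p, ℓ (A n p.1) (p.1 i) ∂P
      = (n : ℝ)⁻¹ * ∑ i : Fin n,
          ((∫ p, ℓ (A n (Function.update p.1 i p.2)) (p.1 i) ∂P)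
            - ∫ p, ℓ (A n p.1) (p.1 i) ∂P) := by
    rw [Finset.sum_sub_distrib]
    have hk : ∑ i : Fin n, ∫ p, ℓ (A n (Function.update p.1 i p.2)) (p.1 i) ∂P
        = (n : ℝ) * ∫ p, f p ∂P := by
      rw [Finset.sum_congr rfl fun i _ => hI i, Finset.sum_const, Finset.card_univ,
        Fintype.card_fin, nsmul_eq_mul]
    rw [hk, mul_sub, ← mul_assoc, inv_mul_cancel₀ hnR.ne', one_mul]
  rw [h3]
  calc (n : ℝ)⁻¹ * ∑ i : Fin n,
          ((∫ p, ℓ (A n (Function.update p.1 i p.2)) (p.1 i) ∂P)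
            - ∫ p, ℓ (A n p.1) (p.1 i) ∂P)
      ≤ (n : ℝ)⁻¹ * ∑ i : Fin n,
          ∫ p, |ℓ (A n p.1) (p.1 i) - ℓ (A n (Function.update p.1 i p.2)) (p.1 i)| ∂P :=
        mul_le_mul_of_nonneg_left (Finset.sum_le_sum fun i _ => h4 i) (by positivity)
    _ = ∫ p, (n : ℝ)⁻¹ * ∑ i : Fin n,
          |ℓ (A n p.1) (p.1 i) - ℓ (A n (Function.update p.1 i p.2)) (p.1 i)| ∂P := by
        rw [← integral_finset_sum _ fun i _ => habs_int i, integral_const_mul]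
    _ = ∫ T, ∫ x', (n : ℝ)⁻¹ * ∑ i : Fin n,
          |ℓ (A n T) (T i) - ℓ (A n (Function.update T i x')) (T i)| ∂D ∂(iid D n) :=
        integral_prod _ ((integrable_finset_sum _ fun i _ => habs_int i).const_mul _)
    _ ≤ ε1 n := hst.2 D inferInstance n hn
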